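/- Consider an LSS with D modes. Suppose there exist symmetric positive definite matrices Q_q ∈ ℝ^{n_q×n_q}, a constant M > 0 with A_qᵀ Q_q + Q_q A_q + M Q_q ≺ 0 for all modes q, and positive scalars γ_{i,j} with γ_{i,j} K_{i,j}ᵀ Q_j K_{i,j} ≺ Q_i for all i ≠ j. Set γ = min_{i≠j} γ_{i,j} and μ = −(ln γ)/M. Then the LSS is uniformly exponentially stable with dwell time 2μ. -/

import Mathlib

open Matrix MeasureTheory

/-- A linear switched system (LSS) with `D` modes: mode `q` has state dimension `n q`,
dynamics matrices `A q`, `B q`, output matrix `C q`, and `K q1 q2` is the coupling matrix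
applied to the state when switching from mode `q1` to mode `q2`. -/
structure LSS (D m p : ℕ) where
  n : Fin D → ℕ
  A : (q : Fin D) → Matrix (Fin (n q)) (Fin (n q)) ℝ
  B : (q : Fin D) → Matrix (Fin (n q)) (Fin m) ℝ
  C : (q : Fin D) → Matrix (Fin p) (Fin (n q)) ℝ
  K : (q1 q2 : Fin D) → Matrix (Fin (n q2)) (Fin (n q1)) ℝ

/-- A switching scenario: a sequence of modes `σ 0, σ 1, …` with `σ i ≠ σ (i+1)` and
strictly increasing switching times `0 = T 0 < T 1 < ⋯`; the `(i+1)`-st dwell time is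
`T (i+1) - T i`. -/
structure SwitchingScenario (D : ℕ) where
  σ : ℕ → Fin D
  T : ℕ → ℝ
  hσ : ∀ i, σ i ≠ σ (i + 1)
  hT0 : T 0 = 0
  hTmono : StrictMono T

/-- `x i` is the piece of the trajectory on the interval `[T i, T (i+1)]` (the system is
in mode `σ i` there): it solves the mode-`σ i` linear ODE driven by `u` and satisfies the
jump conditions given by the coupling matrices. -/
def IsTrajectory {D m p : ℕ} (sys : LSS D m p) (S : SwitchingScenario D)
    (u : ℝ → Fin m → ℝ) (x : (i : ℕ) → ℝ → Fin (sys.n (S.σ i)) → ℝ) : Prop :=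
  (∀ i : ℕ, ∀ s ∈ Set.Icc (S.T i) (S.T (i + 1)),
      HasDerivAt (x i) ((sys.A (S.σ i)).mulVec (x i s) + (sys.B (S.σ i)).mulVec (u s)) s) ∧
  (∀ i : ℕ, x (i + 1) (S.T (i + 1)) =
      (sys.K (S.σ i) (S.σ (i + 1))).mulVec (x i (S.T (i + 1))))

/-- `y` is the output of the trajectory `x`: `y t = C_{σ i} (x i t)` for
`t ∈ (T i, T (i+1)]`. -/
def IsOutput {D m p : ℕ} (sys : LSS D m p) (S : SwitchingScenario D)
    (x : (i : ℕ) → ℝ → Fin (sys.n (S.σ i)) → ℝ) (y : ℝ → Fin p → ℝ) : Prop :=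
  ∀ i : ℕ, ∀ s ∈ Set.Ioc (S.T i) (S.T (i + 1)), y s = (sys.C (S.σ i)).mulVec (x i s)

/-- The LSS is uniformly exponentially stable with dwell time `μ`: there exist constants
`K, M' > 0` such that every zero-input trajectory along a switching scenario whose dwell
times are all `≥ μ` satisfies `‖x(t)‖₂ ≤ K e^{−M't} ‖x(0)‖₂` for all `t ≥ 0`. -/
def UnifExpStable {D m p : ℕ} (sys : LSS D m p) (μ : ℝ) : Prop :=
  ∃ Kc > (0:ℝ), ∃ M' > (0:ℝ),
    ∀ (S : SwitchingScenario D), (∀ i : ℕ, μ ≤ S.T (i + 1) - S.T i) →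
      ∀ (x : (i : ℕ) → ℝ → Fin (sys.n (S.σ i)) → ℝ),
        IsTrajectory sys S (fun _ _ => 0) x →
        (Real.sqrt (∑ j, (x 0 0 j) ^ 2) ≤
            Kc * Real.exp (-(M' * 0)) * Real.sqrt (∑ j, (x 0 0 j) ^ 2)) ∧
        ∀ i : ℕ, ∀ t ∈ Set.Ioc (S.T i) (S.T (i + 1)),
          Real.sqrt (∑ j, (x i t j) ^ 2) ≤
            Kc * Real.exp (-(M' * t)) * Real.sqrt (∑ j, (x 0 0 j) ^ 2)


lemma quad_bounds {n : ℕ} (Q : Matrix (Fin n) (Fin n) ℝ) (hQ : Q.PosDef) :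
    ∃ c > (0:ℝ), ∃ C > (0:ℝ), ∀ v : Fin n → ℝ,
      c * (∑ j, v j ^ 2) ≤ v ⬝ᵥ Q.mulVec v ∧ v ⬝ᵥ Q.mulVec v ≤ C * (∑ j, v j ^ 2) := by
  have hquad : ∀ v : Fin n → ℝ, v ≠ 0 → 0 < v ⬝ᵥ Q.mulVec v := fun v hv => by
    simpa using hQ.dotProduct_mulVec_pos hv
  rcases Nat.eq_zero_or_pos n with hn | hn
  · subst hn
    refine ⟨1, one_pos, 1, one_pos, fun v => ?_⟩
    simp [dotProduct]
  · set f : (Fin n → ℝ) → ℝ := fun v => v ⬝ᵥ Q.mulVec v with hfdef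
    set E : (Fin n → ℝ) → ℝ := fun v => ∑ j, v j ^ 2 with hEdef
    have hf : Continuous f := by
      simp only [hfdef, dotProduct, mulVec]
      apply continuous_finset_sum
      intro j _
      exact (continuous_apply j).mul
        (continuous_finset_sum _ fun k _ => continuous_const.mul (continuous_apply k))
    have hE : Continuous E :=
      continuous_finset_sum _ fun j _ => (continuous_apply j).pow 2
    have hEnn : ∀ v, 0 ≤ E v := fun v => Finset.sum_nonneg fun j _ => sq_nonneg _
    have hEzero : ∀ v : Fin n → ℝ, E v = 0 → v = 0 := by
      intro v hv
      funext j
      have := (Finset.sum_eq_zero_iff_of_nonneg (fun j _ => sq_nonneg (v j))).1 hv j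
        (Finset.mem_univ j)
      exact pow_eq_zero_iff two_ne_zero |>.1 this
    set S : Set (Fin n → ℝ) := E ⁻¹' {1} with hSdef
    have hSclosed : IsClosed S := (isClosed_singleton).preimage hE
    have hSsub : S ⊆ Metric.closedBall 0 1 := by
      intro v hv
      simp only [Metric.mem_closedBall, dist_zero_right]
      have hv1 : E v = 1 := hv
      apply pi_norm_le_iff_of_nonneg zero_le_one |>.2
      intro j
      have h1 : v j ^ 2 ≤ E v := by
        simpa using Finset.single_le_sum (f := fun j => v j ^ 2)
          (fun j _ => sq_nonneg (v j)) (Finset.mem_univ j)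
      rw [hv1] at h1
      rw [Real.norm_eq_abs, abs_le]
      constructor <;> nlinarith
    have hScompact : IsCompact S :=
      (isCompact_closedBall 0 1).of_isClosed_subset hSclosed hSsub
    have hSne : S.Nonempty := by
      refine ⟨Pi.single ⟨0, hn⟩ 1, ?_⟩
      show E _ = 1
      simp [hEdef, Pi.single_apply]
    obtain ⟨vmin, hvminS, hmin⟩ := hScompact.exists_isMinOn hSne hf.continuousOn
    obtain ⟨vmax, hvmaxS, hmax⟩ := hScompact.exists_isMaxOn hSne hf.continuousOn
    have hvmin_ne : vmin ≠ 0 := by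
      intro h
      have : E vmin = 1 := hvminS
      rw [h] at this
      simp [hEdef] at this
    have hc : 0 < f vmin := hquad vmin hvmin_ne
    have hC : 0 < f vmax := lt_of_lt_of_le hc (hmin hvmaxS)
    refine ⟨f vmin, hc, f vmax, hC, fun v => ?_⟩
    by_cases hv : v = 0
    · subst hv
      simp [hfdef, hEdef, dotProduct]
    · have hEv : 0 < E v := by
        rcases (hEnn v).lt_or_eq with h | h
        · exact h
        · exact absurd (hEzero v h.symm) hv
      set r : ℝ := Real.sqrt (E v) with hrdef
      have hr : 0 < r := Real.sqrt_pos.2 hEv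
      set w : Fin n → ℝ := r⁻¹ • v with hwdef
      have hr2 : r ^ 2 = E v := Real.sq_sqrt (hEnn v)
      have hEsmul : ∀ (a : ℝ) (u : Fin n → ℝ), E (a • u) = a ^ 2 * E u := by
        intro a u
        simp only [hEdef, Pi.smul_apply, smul_eq_mul, mul_pow, Finset.mul_sum]
      have hfsmul : ∀ (a : ℝ) (u : Fin n → ℝ), f (a • u) = a ^ 2 * f u := by
        intro a u
        simp only [hfdef]
        rw [Matrix.mulVec_smul, smul_dotProduct, dotProduct_smul]
        simp [smul_eq_mul]; ring
      have hwS : w ∈ S := by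
        show E w = 1
        rw [hwdef, hEsmul, inv_pow, hr2]
        field_simp
      have hfw : f w = (r ^ 2)⁻¹ * f v := by rw [hwdef, hfsmul, inv_pow]
      have hfv : f v = r ^ 2 * f w := by
        rw [hfw]
        field_simp
      constructor
      · calc f vmin * E v = E v * f vmin := by ring
          _ ≤ E v * f w := mul_le_mul_of_nonneg_left (hmin hwS) (hEnn v)
          _ = f v := by rw [hfv, hr2]
      · calc f v = E v * f w := by rw [hfv, hr2]
          _ ≤ E v * f vmax := mul_le_mul_of_nonneg_left (hmax hwS) (hEnn v)
          _ = f vmax * E v := by ring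


lemma hasDerivAt_quad {n : ℕ} (Q : Matrix (Fin n) (Fin n) ℝ) {x : ℝ → Fin n → ℝ}
    {d : Fin n → ℝ} {t : ℝ} (hx : HasDerivAt x d t) :
    HasDerivAt (fun s => x s ⬝ᵥ Q.mulVec (x s))
      (d ⬝ᵥ Q.mulVec (x t) + x t ⬝ᵥ Q.mulVec d) t := by
  have hcoord : ∀ j, HasDerivAt (fun s => x s j) (d j) t := fun j => hasDerivAt_pi.1 hx j
  have hinner : ∀ j, HasDerivAt (fun s => ∑ k, Q j k * x s k) (∑ k, Q j k * d k) t :=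
    fun j => HasDerivAt.fun_sum fun k _ => (hcoord k).const_mul (Q j k)
  have h : HasDerivAt (fun s => ∑ j, x s j * ∑ k, Q j k * x s k)
      (∑ j, (d j * ∑ k, Q j k * x t k + x t j * ∑ k, Q j k * d k)) t :=
    HasDerivAt.fun_sum fun j _ => (hcoord j).mul (hinner j)
  convert h using 1 <;>
  simp [dotProduct, mulVec, Finset.sum_add_distrib]

lemma lyap_bound {n : ℕ} {Q A : Matrix (Fin n) (Fin n) ℝ} {Mc : ℝ}
    (hLyap : (-(Aᵀ * Q + Q * A + Mc • Q)).PosDef) (v : Fin n → ℝ) :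
    (A.mulVec v) ⬝ᵥ Q.mulVec v + v ⬝ᵥ Q.mulVec (A.mulVec v) ≤ -(Mc * (v ⬝ᵥ Q.mulVec v)) := by
  have h0 : 0 ≤ v ⬝ᵥ (-(Aᵀ * Q + Q * A + Mc • Q)).mulVec v := by
    simpa using hLyap.posSemidef.dotProduct_mulVec_nonneg v
  rw [Matrix.neg_mulVec] at h0
  simp only [Matrix.add_mulVec, Matrix.smul_mulVec, dotProduct_neg, dotProduct_add,
    dotProduct_smul, smul_eq_mul, ← Matrix.mulVec_mulVec] at h0
  have h1 : v ⬝ᵥ Aᵀ.mulVec (Q.mulVec v) = (A.mulVec v) ⬝ᵥ Q.mulVec v := by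
    rw [Matrix.dotProduct_mulVec, Matrix.vecMul_transpose]
  linarith [h1.symm.le, h1.le]

lemma decay {n : ℕ} {Q A : Matrix (Fin n) (Fin n) ℝ} {Mc : ℝ}
    (hLyap : (-(Aᵀ * Q + Q * A + Mc • Q)).PosDef)
    {x : ℝ → Fin n → ℝ} {a b : ℝ}
    (hx : ∀ s ∈ Set.Icc a b, HasDerivAt x (A.mulVec (x s)) s) :
    ∀ t ∈ Set.Icc a b, x t ⬝ᵥ Q.mulVec (x t) ≤
      Real.exp (-(Mc * (t - a))) * (x a ⬝ᵥ Q.mulVec (x a)) := by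
  intro t ht
  set V : ℝ → ℝ := fun s => x s ⬝ᵥ Q.mulVec (x s) with hV
  set W : ℝ → ℝ := fun s => Real.exp (Mc * s) * V s with hW
  have hab : a ≤ b := le_trans ht.1 ht.2
  have hWd : ∀ s ∈ Set.Icc a b, HasDerivAt W
      (Real.exp (Mc * s) * (Mc * 1) * V s + Real.exp (Mc * s) *
        ((A.mulVec (x s)) ⬝ᵥ Q.mulVec (x s) + x s ⬝ᵥ Q.mulVec (A.mulVec (x s)))) s := by
    intro s hs
    have h1 : HasDerivAt (fun u : ℝ => Real.exp (Mc * u)) (Real.exp (Mc * s) * (Mc * 1)) s :=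
      ((hasDerivAt_id s).const_mul Mc).exp
    exact h1.mul (hasDerivAt_quad Q (hx s hs))
  have hWc : ContinuousOn W (Set.Icc a b) :=
    fun s hs => ((hWd s hs).continuousAt).continuousWithinAt
  have hanti : AntitoneOn W (Set.Icc a b) := by
    apply antitoneOn_of_deriv_nonpos (convex_Icc a b) hWc
    · intro s hs
      rw [interior_Icc] at hs
      exact (hWd s (Set.Ioo_subset_Icc_self hs)).differentiableAt.differentiableWithinAt
    · intro s hs
      rw [interior_Icc] at hs
      have hs' := Set.Ioo_subset_Icc_self hs
      rw [(hWd s hs').deriv]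
      have hb := lyap_bound hLyap (x s)
      have he : (0:ℝ) < Real.exp (Mc * s) := Real.exp_pos _
      nlinarith [mul_le_mul_of_nonneg_left hb he.le]
  have hWle : Real.exp (Mc * t) * V t ≤ Real.exp (Mc * a) * V a :=
    hanti (Set.left_mem_Icc.2 hab) ht ht.1
  calc V t = Real.exp (-(Mc * t)) * (Real.exp (Mc * t) * V t) := by
              rw [← mul_assoc, ← Real.exp_add]; simp
    _ ≤ Real.exp (-(Mc * t)) * (Real.exp (Mc * a) * V a) :=
        mul_le_mul_of_nonneg_left hWle (Real.exp_pos _).le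
    _ = Real.exp (-(Mc * (t - a))) * V a := by
        rw [← mul_assoc, ← Real.exp_add]
        congr 2
        ring

lemma jump_bound {n1 n2 : ℕ} {Qi : Matrix (Fin n1) (Fin n1) ℝ} {Qj : Matrix (Fin n2) (Fin n2) ℝ}
    {K : Matrix (Fin n2) (Fin n1) ℝ} {g : ℝ}
    (h : (Qi - g • (Kᵀ * Qj * K)).PosDef) (v : Fin n1 → ℝ) :
    g * ((K.mulVec v) ⬝ᵥ Qj.mulVec (K.mulVec v)) ≤ v ⬝ᵥ Qi.mulVec v := by
  have h0 : 0 ≤ v ⬝ᵥ (Qi - g • (Kᵀ * Qj * K)).mulVec v := by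
    simpa using h.posSemidef.dotProduct_mulVec_nonneg v
  rw [Matrix.sub_mulVec] at h0
  simp only [dotProduct_sub, Matrix.smul_mulVec, dotProduct_smul, smul_eq_mul] at h0
  have h1 : v ⬝ᵥ (Kᵀ * Qj * K).mulVec v = (K.mulVec v) ⬝ᵥ Qj.mulVec (K.mulVec v) := by
    rw [← Matrix.mulVec_mulVec, ← Matrix.mulVec_mulVec, Matrix.dotProduct_mulVec,
      Matrix.vecMul_transpose]
  rw [h1] at h0
  linarith

/-- Corollary 2: if positive definite `Q_q` satisfy
`A_qᵀ Q_q + Q_q A_q + M Q_q ≺ 0` for some `M > 0` and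
`γ_{i,j} K_{i,j}ᵀ Q_j K_{i,j} ≺ Q_i` with `γ_{i,j} > 0` for all `i ≠ j`, then with
`γ = min_{i≠j} γ_{i,j}` and `μ = −(ln γ)/M`, the LSS is uniformly exponentially stable
with dwell time `2μ`. -/
theorem stmt_12 {D m p : ℕ} (sys : LSS D m p)
    (Q : (q : Fin D) → Matrix (Fin (sys.n q)) (Fin (sys.n q)) ℝ)
    (hQ : ∀ q, (Q q).PosDef)
    (Mc : ℝ) (hMc : 0 < Mc)
    (hLyap : ∀ q, (-((sys.A q)ᵀ * Q q + Q q * sys.A q + Mc • Q q)).PosDef)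
    (γ : Fin D → Fin D → ℝ) (hγpos : ∀ i j, i ≠ j → 0 < γ i j)
    (hγ : ∀ i j, i ≠ j → (Q i - γ i j • ((sys.K i j)ᵀ * Q j * sys.K i j)).PosDef)
    (γc : ℝ) (hγc : IsLeast {x : ℝ | ∃ i j, i ≠ j ∧ x = γ i j} γc) :
    UnifExpStable sys (2 * (-(Real.log γc) / Mc)) := by
  classical
  obtain ⟨⟨i0, j0, hij0, hγceq⟩, hγlb⟩ := hγc
  have hγcpos : 0 < γc := hγceq ▸ hγpos i0 j0 hij0
  have hD : Nonempty (Fin D) := ⟨i0⟩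
  have hb : ∀ q : Fin D, ∃ c > (0:ℝ), ∃ C > (0:ℝ), ∀ v : Fin (sys.n q) → ℝ,
      c * (∑ j, v j ^ 2) ≤ v ⬝ᵥ (Q q).mulVec v ∧ v ⬝ᵥ (Q q).mulVec v ≤ C * (∑ j, v j ^ 2) :=
    fun q => quad_bounds (Q q) (hQ q)
  choose c hc0 C hC0 hbound using hb
  set cmin : ℝ := Finset.univ.inf' Finset.univ_nonempty c with hcmin_def
  set Cmax : ℝ := Finset.univ.sup' Finset.univ_nonempty C with hCmax_def
  have hcmin_pos : 0 < cmin := by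
    rw [hcmin_def, Finset.lt_inf'_iff]
    exact fun q _ => hc0 q
  have hcmin_le : ∀ q, cmin ≤ c q := fun q => Finset.inf'_le _ (Finset.mem_univ q)
  have hCmax_ge : ∀ q, C q ≤ Cmax := fun q => Finset.le_sup' _ (Finset.mem_univ q)
  have hCmax_pos : 0 < Cmax := lt_of_lt_of_le (hC0 i0) (hCmax_ge i0)
  set Kc : ℝ := max 1 (Real.sqrt (Cmax / cmin)) with hKc_def
  have hKc1 : (1:ℝ) ≤ Kc := le_max_left _ _
  have hKcpos : (0:ℝ) < Kc := lt_of_lt_of_le one_pos hKc1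
  have hKcsq : Cmax / cmin ≤ Kc ^ 2 := by
    have h1 : Real.sqrt (Cmax / cmin) ≤ Kc := le_max_right _ _
    nlinarith [Real.sq_sqrt (le_of_lt (div_pos hCmax_pos hcmin_pos)),
      Real.sqrt_nonneg (Cmax/cmin)]
  refine ⟨Kc, hKcpos, Mc / 4, by linarith, fun S hdwell x hx => ?_⟩
  set V : (i : ℕ) → ℝ → ℝ := fun i t => x i t ⬝ᵥ (Q (S.σ i)).mulVec (x i t) with hVdef
  have hVnn : ∀ i t, 0 ≤ V i t := fun i t => by
    simpa using (hQ (S.σ i)).posSemidef.dotProduct_mulVec_nonneg (x i t)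
  have hode : ∀ i : ℕ, ∀ s ∈ Set.Icc (S.T i) (S.T (i+1)),
      HasDerivAt (x i) ((sys.A (S.σ i)).mulVec (x i s)) s := by
    intro i s hs
    have h := hx.1 i s hs
    have h0 : (sys.B (S.σ i)).mulVec (fun _ => (0:ℝ)) = 0 := by
      ext k; simp [Matrix.mulVec, dotProduct]
    rw [h0, add_zero] at h
    exact h
  have hdecay : ∀ i : ℕ, ∀ t ∈ Set.Icc (S.T i) (S.T (i+1)),
      V i t ≤ Real.exp (-(Mc * (t - S.T i))) * V i (S.T i) :=
    fun i => decay (hLyap (S.σ i)) (hode i)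
  have hjump : ∀ i : ℕ, V (i+1) (S.T (i+1)) ≤ γc⁻¹ * V i (S.T (i+1)) := by
    intro i
    have hne := S.hσ i
    have h1 := jump_bound (hγ (S.σ i) (S.σ (i+1)) hne) (x i (S.T (i+1)))
    have h2 : γc ≤ γ (S.σ i) (S.σ (i+1)) := hγlb ⟨_, _, hne, rfl⟩
    have h3 : 0 ≤ V (i+1) (S.T (i+1)) := hVnn _ _
    have h5 : γ (S.σ i) (S.σ (i+1)) * V (i+1) (S.T (i+1)) ≤ V i (S.T (i+1)) := by
      rw [hVdef]
      simp only [hx.2 i]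
      exact h1
    have h4 : γc * V (i+1) (S.T (i+1)) ≤ V i (S.T (i+1)) := by
      nlinarith [mul_le_mul_of_nonneg_right h2 h3]
    calc V (i+1) (S.T (i+1)) = γc⁻¹ * (γc * V (i+1) (S.T (i+1))) := by
          field_simp
      _ ≤ γc⁻¹ * V i (S.T (i+1)) :=
          mul_le_mul_of_nonneg_left h4 (inv_nonneg.2 hγcpos.le)
  have hVT : ∀ i : ℕ, V i (S.T i) ≤ γc⁻¹ ^ i * Real.exp (-(Mc * S.T i)) * V 0 0 := by
    intro i
    induction i with
    | zero => simp [S.hT0]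
    | succ i ih =>
      have hle : S.T i ≤ S.T (i+1) := (S.hTmono (Nat.lt_succ_self i)).le
      have h2 := hdecay i (S.T (i+1)) ⟨hle, le_refl _⟩
      have hinv : (0:ℝ) ≤ γc⁻¹ := inv_nonneg.2 hγcpos.le
      have hexp : (0:ℝ) < Real.exp (-(Mc * (S.T (i+1) - S.T i))) := Real.exp_pos _
      calc V (i+1) (S.T (i+1)) ≤ γc⁻¹ * V i (S.T (i+1)) := hjump i
        _ ≤ γc⁻¹ * (Real.exp (-(Mc * (S.T (i+1) - S.T i))) * V i (S.T i)) :=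
            mul_le_mul_of_nonneg_left h2 hinv
        _ ≤ γc⁻¹ * (Real.exp (-(Mc * (S.T (i+1) - S.T i))) *
              (γc⁻¹ ^ i * Real.exp (-(Mc * S.T i)) * V 0 0)) := by
            apply mul_le_mul_of_nonneg_left _ hinv
            exact mul_le_mul_of_nonneg_left ih hexp.le
        _ = γc⁻¹ ^ (i+1) * (Real.exp (-(Mc * (S.T (i+1) - S.T i))) *
              Real.exp (-(Mc * S.T i))) * V 0 0 := by ring
        _ = γc⁻¹ ^ (i+1) * Real.exp (-(Mc * S.T (i+1))) * V 0 0 := by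
            rw [← Real.exp_add,
              show -(Mc * (S.T (i+1) - S.T i)) + -(Mc * S.T i) = -(Mc * S.T (i+1)) by ring]
  have hTge : ∀ i : ℕ, (i : ℝ) * (2 * (-(Real.log γc) / Mc)) ≤ S.T i := by
    intro i
    induction i with
    | zero => simp [S.hT0]
    | succ i ih =>
      have := hdwell i
      push_cast
      linarith
  have hpow : ∀ i : ℕ, ∀ t : ℝ, S.T i ≤ t → γc⁻¹ ^ i ≤ Real.exp (Mc * t / 2) := by
    intro i t hti
    have h1 : γc⁻¹ ^ i = Real.exp ((i : ℝ) * (-(Real.log γc))) := by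
      rw [← Real.log_inv, ← Real.log_pow, Real.exp_log (pow_pos (inv_pos.2 hγcpos) i)]
    have h2 : (i:ℝ) * (2 * (-(Real.log γc) / Mc)) ≤ t := le_trans (hTge i) hti
    have h3 : (2 * (-(Real.log γc) / Mc)) * (Mc / 2) = -(Real.log γc) := by
      field_simp
    rw [h1]
    apply Real.exp_le_exp.2
    calc (i:ℝ) * (-(Real.log γc)) = ((i:ℝ) * (2 * (-(Real.log γc) / Mc))) * (Mc/2) := by
          rw [mul_assoc, h3]
      _ ≤ t * (Mc/2) := mul_le_mul_of_nonneg_right h2 (by linarith)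
      _ = Mc * t / 2 := by ring
  constructor
  · have h0 : Real.exp (-(Mc/4 * 0)) = 1 := by norm_num
    rw [h0, mul_one]
    nlinarith [Real.sqrt_nonneg (∑ j, (x 0 0 j)^2), hKc1]
  · intro i t ht
    have hIcc : t ∈ Set.Icc (S.T i) (S.T (i+1)) := ⟨ht.1.le, ht.2⟩
    have hti : S.T i ≤ t := ht.1.le
    have h1 := hdecay i t hIcc
    have h2 := hVT i
    have h3 := hpow i t hti
    have hexp1 : (0:ℝ) < Real.exp (-(Mc * (t - S.T i))) := Real.exp_pos _
    have hV00 : 0 ≤ V 0 0 := hVnn 0 0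
    have h5 : V i t ≤ Real.exp (-(Mc * t / 2)) * V 0 0 := by
      calc V i t ≤ Real.exp (-(Mc * (t - S.T i))) * V i (S.T i) := h1
        _ ≤ Real.exp (-(Mc * (t - S.T i))) * (γc⁻¹ ^ i * Real.exp (-(Mc * S.T i)) * V 0 0) :=
            mul_le_mul_of_nonneg_left h2 hexp1.le
        _ = γc⁻¹ ^ i * (Real.exp (-(Mc * (t - S.T i))) * Real.exp (-(Mc * S.T i))) * V 0 0 := by
            ring
        _ = γc⁻¹ ^ i * Real.exp (-(Mc * t)) * V 0 0 := by
            rw [← Real.exp_add, show -(Mc * (t - S.T i)) + -(Mc * S.T i) = -(Mc * t) by ring]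
        _ ≤ Real.exp (Mc * t / 2) * Real.exp (-(Mc * t)) * V 0 0 := by
            apply mul_le_mul_of_nonneg_right _ hV00
            exact mul_le_mul_of_nonneg_right h3 (Real.exp_pos _).le
        _ = Real.exp (-(Mc * t / 2)) * V 0 0 := by
            rw [← Real.exp_add, show Mc * t / 2 + -(Mc * t) = -(Mc * t / 2) by ring]
    set E : ℝ := ∑ j, (x i t j) ^ 2 with hE_def
    set E0 : ℝ := ∑ j, (x 0 0 j) ^ 2 with hE0_def
    have hEnn : (0:ℝ) ≤ E := Finset.sum_nonneg fun j _ => sq_nonneg _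
    have hE0nn : (0:ℝ) ≤ E0 := Finset.sum_nonneg fun j _ => sq_nonneg _
    set e : ℝ := Real.exp (-(Mc/4 * t)) with he_def
    have he2 : e ^ 2 = Real.exp (-(Mc * t / 2)) := by
      rw [he_def, sq, ← Real.exp_add]
      congr 1
      ring
    have hKc2 : Cmax ≤ Kc ^ 2 * cmin := (div_le_iff₀ hcmin_pos).1 hKcsq
    have hchain : cmin * E ≤ Real.exp (-(Mc * t / 2)) * (Cmax * E0) := by
      calc cmin * E ≤ c (S.σ i) * E := mul_le_mul_of_nonneg_right (hcmin_le _) hEnn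
        _ ≤ V i t := (hbound _ (x i t)).1
        _ ≤ Real.exp (-(Mc * t / 2)) * V 0 0 := h5
        _ ≤ Real.exp (-(Mc * t / 2)) * (Cmax * E0) := by
            apply mul_le_mul_of_nonneg_left _ (Real.exp_pos _).le
            exact le_trans ((hbound _ (x 0 0)).2)
              (mul_le_mul_of_nonneg_right (hCmax_ge _) hE0nn)
    have hfinal : E ≤ (Kc * e) ^ 2 * E0 := by
      rw [mul_pow, he2, ← mul_le_mul_iff_right₀ hcmin_pos]
      calc cmin * E ≤ Real.exp (-(Mc * t / 2)) * (Cmax * E0) := hchain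
        _ ≤ Real.exp (-(Mc * t / 2)) * ((Kc ^ 2 * cmin) * E0) := by
            apply mul_le_mul_of_nonneg_left _ (Real.exp_pos _).le
            exact mul_le_mul_of_nonneg_right hKc2 hE0nn
        _ = cmin * (Kc ^ 2 * Real.exp (-(Mc * t / 2)) * E0) := by ring
    calc Real.sqrt E ≤ Real.sqrt ((Kc * e) ^ 2 * E0) := Real.sqrt_le_sqrt hfinal
      _ = Kc * e * Real.sqrt E0 := by
          rw [Real.sqrt_mul (sq_nonneg _), Real.sqrt_sq (by positivity)]
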